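/- Smoothing Lemma: Let n, k, ℓ, a be positive integers with ℓ ≥ k and n ≥ a·ℓ·(k+1). If there exists an a-uniform (n,k,ℓ)-splitter F, then there exists a uniform (n,k,ℓ)-splitter F′ with |F′| ≤ (k+1)·|F|. -/

import Mathlib

open Finset

/-- The number of elements of `[n]` mapped to `i` by `f`. -/
def preimCard {n ℓ : ℕ} (f : Fin n → Fin ℓ) (i : Fin ℓ) : ℕ :=
  (Finset.univ.filter fun x => f x = i).card

/-- The size of the image of `f`. -/
def imageSize {n ℓ : ℕ} (f : Fin n → Fin ℓ) : ℕ :=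
  (Finset.univ.image f).card

/-- An `(n,k,ℓ)`-splitter: for every `k`-subset `S` of `[n]` some `f` in the family
splits `S` as evenly as possible into the `ℓ` parts `f⁻¹(i) ∩ S`. -/
def IsSplitter (n k ℓ : ℕ) (F : Finset (Fin n → Fin ℓ)) : Prop :=
  ∀ S : Finset (Fin n), S.card = k → ∃ f ∈ F, ∀ i : Fin ℓ,
    k / ℓ ≤ (S.filter fun x => f x = i).card ∧
      (S.filter fun x => f x = i).card ≤ (k + ℓ - 1) / ℓ

/-- A uniform family: each `f` has all preimages of elements of its image of size
`⌊n/|Im f|⌋` or `⌈n/|Im f|⌉`. -/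
def IsUniformFamily (n ℓ : ℕ) (F : Finset (Fin n → Fin ℓ)) : Prop :=
  ∀ f ∈ F, ∀ i ∈ Finset.univ.image f,
    n / imageSize f ≤ preimCard f i ∧
      preimCard f i ≤ (n + imageSize f - 1) / imageSize f

/-- An `a`-uniform family: preimage sizes deviate by at most `a` from
`⌊n/|Im f|⌋`/`⌈n/|Im f|⌉`, and any two preimage sizes differ by at most `a`. -/
def IsAUniformFamily (n ℓ a : ℕ) (F : Finset (Fin n → Fin ℓ)) : Prop :=
  ∀ f ∈ F,
    (∀ i ∈ Finset.univ.image f,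
      n / imageSize f - a ≤ preimCard f i ∧
        preimCard f i ≤ (n + imageSize f - 1) / imageSize f + a) ∧
    (∀ i ∈ Finset.univ.image f, ∀ j ∈ Finset.univ.image f,
      |(preimCard f i : ℤ) - (preimCard f j : ℤ)| ≤ (a : ℤ))

/-- A strongly uniform family: for each `f` and every `i ∈ [ℓ]`,
`⌊n/ℓ⌋ ≤ |f⁻¹(i)| ≤ ⌈n/ℓ⌉`. -/
def IsStronglyUniformFamily (n ℓ : ℕ) (F : Finset (Fin n → Fin ℓ)) : Prop :=
  ∀ f ∈ F, ∀ i : Fin ℓ, n / ℓ ≤ preimCard f i ∧ preimCard f i ≤ (n + ℓ - 1) / ℓ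

/-- **Smoothing Lemma.** If `ℓ ≥ k`, `n ≥ a·ℓ·(k+1)` and there is an `a`-uniform
`(n,k,ℓ)`-splitter `F`, then there is a uniform `(n,k,ℓ)`-splitter of size at most
`(k+1)·|F|`. -/
lemma sigma_mk_cast {ℓ : ℕ} (T' : Fin ℓ → ℕ) (i : Fin ℓ) (s : Σ j, Fin (T' j)) (h : s.1 = i) :
    (⟨i, Fin.cast (congrArg T' h) s.2⟩ : Σ j, Fin (T' j)) = s := by
  subst h; rfl

lemma phi_count {N ℓ : ℕ} (T' : Fin ℓ → ℕ) (e2 : (Σ i : Fin ℓ, Fin (T' i)) ≃ Fin N) (i : Fin ℓ) :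
    ((univ : Finset (Fin N)).filter fun j => (e2.symm j).1 = i).card = T' i := by
  rw [← Finset.card_fin (T' i)]
  refine Finset.card_bij'
    (fun j hj => Fin.cast (congrArg T' (Finset.mem_filter.1 hj).2) (e2.symm j).2)
    (fun v _ => e2 ⟨i, v⟩) ?_ ?_ ?_ ?_
  · intro j hj; exact Finset.mem_univ _
  · intro v _
    simp only [Finset.mem_filter, Finset.mem_univ, true_and, Equiv.symm_apply_apply]
  · intro j hj
    conv_rhs => rw [← e2.apply_symm_apply j]
    exact congrArg e2 (sigma_mk_cast T' i (e2.symm j) (Finset.mem_filter.1 hj).2)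
  · intro v hv
    have h := e2.symm_apply_apply ⟨i, v⟩
    have h1 : (e2.symm (e2 ⟨i, v⟩)).1 = i := by rw [h]
    have h2 := sigma_mk_cast T' i (e2.symm (e2 ⟨i, v⟩)) h1
    have h3 := h2.trans h
    rw [Sigma.ext_iff] at h3
    exact eq_of_heq h3.2

lemma fill_lemma {n ℓ : ℕ} (hℓ : 0 < ℓ) (U : Finset (Fin n)) (T' : Fin ℓ → ℕ)
    (hsum : ∑ i, T' i = U.card) :
    ∃ h : Fin n → Fin ℓ, ∀ i, (U.filter fun x => h x = i).card = T' i := by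
  classical
  set N := U.card with hN
  have e1 : {x // x ∈ U} ≃ Fin N := U.equivFin
  have hcard : Fintype.card (Σ i : Fin ℓ, Fin (T' i)) = N := by
    simp [Fintype.card_sigma, hsum]
  have e2 : (Σ i : Fin ℓ, Fin (T' i)) ≃ Fin N := Fintype.equivFinOfCardEq hcard
  set φ : Fin N → Fin ℓ := fun j => (e2.symm j).1 with hφ
  refine ⟨fun x => if hx : x ∈ U then φ (e1 ⟨x, hx⟩) else ⟨0, hℓ⟩, ?_⟩
  intro i
  have step1 : (U.filter fun x => (if hx : x ∈ U then φ (e1 ⟨x, hx⟩) else ⟨0, hℓ⟩) = i).card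
      = ((univ : Finset (Fin N)).filter fun j => φ j = i).card := by
    apply Finset.card_bij (fun x hx => e1 ⟨x, (Finset.mem_filter.1 hx).1⟩)
    · intro x hx
      obtain ⟨hxU, hxi⟩ := Finset.mem_filter.1 hx
      rw [dif_pos hxU] at hxi
      simp [hxi]
    · intro x hx y hy hxy
      have := e1.injective hxy
      exact Subtype.ext_iff.1 this
    · intro j hj
      refine ⟨(e1.symm j).1, ?_, ?_⟩
      · rw [Finset.mem_filter]
        refine ⟨(e1.symm j).2, ?_⟩
        rw [dif_pos (e1.symm j).2]
        have : (⟨(e1.symm j).1, (e1.symm j).2⟩ : {x // x ∈ U}) = e1.symm j := rfl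
        rw [this, e1.apply_symm_apply]
        exact (Finset.mem_filter.1 hj).2
      · have : (⟨(e1.symm j).1, (e1.symm j).2⟩ : {x // x ∈ U}) = e1.symm j := rfl
        rw [this, e1.apply_symm_apply]
  rw [step1]
  exact phi_count T' e2 i

lemma rearrange_lemma {n ℓ : ℕ} (hℓ : 0 < ℓ) (f : Fin n → Fin ℓ) (T : Fin ℓ → ℕ)
    (D : Finset (Fin n)) (hsum : ∑ i, T i = n)
    (hD : ∀ i, (D.filter fun x => f x = i).card ≤ T i) :
    ∃ g : Fin n → Fin ℓ, (∀ x ∈ D, g x = f x) ∧ ∀ i, preimCard g i = T i := by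
  classical
  set d : Fin ℓ → ℕ := fun i => (D.filter fun x => f x = i).card with hd
  have hD' : ∀ i, d i ≤ T i := hD
  have hdsum : ∑ i, d i = D.card :=
    (Finset.card_eq_sum_card_fiberwise (fun x _ => mem_univ (f x))).symm
  have hDn : D.card ≤ n := by
    have := Finset.card_le_univ D
    simpa using this
  have hsum' : ∑ i, (T i - d i) = Dᶜ.card := by
    have h1 : ∑ i, (T i - d i) + ∑ i, d i = ∑ i, T i := by
      rw [← Finset.sum_add_distrib]
      exact Finset.sum_congr rfl fun i _ => by have := hD' i; omega
    have h2 : Dᶜ.card = n - D.card := by simp [Finset.card_compl]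
    omega
  obtain ⟨h, hh⟩ := fill_lemma hℓ Dᶜ (fun i => T i - d i) hsum'
  refine ⟨fun x => if x ∈ D then f x else h x, fun x hx => if_pos hx, ?_⟩
  intro i
  have hsplit : (univ.filter fun x => (if x ∈ D then f x else h x) = i)
      = (D.filter fun x => f x = i) ∪ (Dᶜ.filter fun x => h x = i) := by
    ext x
    by_cases hx : x ∈ D <;> simp [hx, Finset.mem_filter, Finset.mem_union]
  have hdisj : Disjoint (D.filter fun x => f x = i) (Dᶜ.filter fun x => h x = i) :=
    Finset.disjoint_filter_filter (disjoint_compl_right)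
  rw [preimCard, hsplit, Finset.card_union_of_disjoint hdisj, hh i]
  have h3 : (D.filter fun x => f x = i).card = d i := rfl
  rw [h3]
  have := hD' i
  omega

lemma exists_disjoint_blocks {α : Type*} [DecidableEq α] (e : ℕ) :
    ∀ (N : ℕ) (s : Finset α), N * e ≤ s.card → ∃ B : ℕ → Finset α,
      (∀ t < N, B t ⊆ s ∧ (B t).card = e) ∧
      (∀ t < N, ∀ t' < N, t ≠ t' → Disjoint (B t) (B t')) := by
  intro N
  induction N with
  | zero => intro s _; exact ⟨fun _ => ∅, by omega, by omega⟩
  | succ N ih =>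
    intro s hs
    obtain ⟨B0, hB0s, hB0c⟩ := Finset.exists_subset_card_eq
      (show e ≤ s.card by nlinarith)
    obtain ⟨B', hB'1, hB'2⟩ := ih (s \ B0) (by
      rw [Finset.card_sdiff_of_subset hB0s, hB0c]
      have : (N + 1) * e = N * e + e := by ring
      omega)
    refine ⟨fun t => if t = 0 then B0 else B' (t - 1), ?_, ?_⟩
    · intro t ht
      by_cases h0 : t = 0
      · simp [h0, hB0s, hB0c]
      · have ht' : t - 1 < N := by omega
        have := hB'1 (t - 1) ht'
        simp only [h0, if_false]
        exact ⟨this.1.trans (Finset.sdiff_subset), this.2⟩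
    · intro t ht t' ht' hne
      by_cases h0 : t = 0 <;> by_cases h0' : t' = 0
      · omega
      · simp only [h0, h0', if_true, if_false]
        have := (hB'1 (t' - 1) (by omega)).1
        exact Finset.disjoint_left.2 fun x hx hx' =>
          (Finset.mem_sdiff.1 (this hx')).2 hx
      · simp only [h0, h0', if_true, if_false]
        have := (hB'1 (t - 1) (by omega)).1
        exact Finset.disjoint_left.2 fun x hx hx' =>
          (Finset.mem_sdiff.1 (this hx)).2 hx'
      · simp only [h0, h0', if_false]
        exact hB'2 (t - 1) (by omega) (t' - 1) (by omega) (by omega)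

lemma mem_image_iff_preim {n ℓ : ℕ} (f : Fin n → Fin ℓ) (i : Fin ℓ) :
    i ∈ Finset.univ.image f ↔ 0 < preimCard f i := by
  rw [preimCard, Finset.card_pos]
  constructor
  · rintro h
    obtain ⟨x, _, hx⟩ := Finset.mem_image.1 h
    exact ⟨x, Finset.mem_filter.2 ⟨Finset.mem_univ x, hx⟩⟩
  · rintro ⟨x, hx⟩
    exact Finset.mem_image.2 ⟨x, Finset.mem_univ x, (Finset.mem_filter.1 hx).2⟩

lemma perF {n k ℓ a : ℕ} (hk : 0 < k) (hℓ : 0 < ℓ) (ha : 0 < a) (hn : 0 < n)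
    (hsize : a * ℓ * (k + 1) ≤ n) (f : Fin n → Fin ℓ)
    (hpw : ∀ i ∈ Finset.univ.image f, ∀ j ∈ Finset.univ.image f,
      |(preimCard f i : ℤ) - (preimCard f j : ℤ)| ≤ (a : ℤ)) :
    ∃ G : Finset (Fin n → Fin ℓ), G.card ≤ k + 1 ∧
      (∀ g ∈ G, ∀ i ∈ Finset.univ.image g,
        n / imageSize g ≤ preimCard g i ∧
          preimCard g i ≤ (n + imageSize g - 1) / imageSize g) ∧
      (∀ S : Finset (Fin n), S.card = k → ∃ g ∈ G, ∀ x ∈ S, g x = f x) := by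
  classical
  set Im := Finset.univ.image f with hIm
  have hImne : Im.Nonempty := ⟨f ⟨0, hn⟩, Finset.mem_image_of_mem f (Finset.mem_univ _)⟩
  set m := imageSize f with hm_def
  have hmIm : Im.card = m := rfl
  have hm : 0 < m := Finset.card_pos.2 hImne
  have hmℓ : m ≤ ℓ := by
    rw [← hmIm]
    simpa using Finset.card_le_univ Im
  set q := n / m with hq_def
  set r := n % m with hr_def
  have hqr : m * q + r = n := Nat.div_add_mod n m
  have hrm : r < m := Nat.mod_lt _ hm
  have hq : a * (k + 1) ≤ q := by
    rw [hq_def, Nat.le_div_iff_mul_le hm]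
    calc a * (k + 1) * m ≤ a * (k + 1) * ℓ := by
          exact Nat.mul_le_mul_left _ hmℓ
      _ = a * ℓ * (k + 1) := by ring
      _ ≤ n := hsize
  have hq1 : 1 ≤ q := le_trans (by nlinarith) hq
  have hc0 : ∀ i, i ∉ Im → preimCard f i = 0 := by
    intro i hi
    simp only [preimCard, Finset.card_eq_zero]
    rw [Finset.filter_eq_empty_iff]
    intro x _
    exact fun h => hi (h ▸ Finset.mem_image_of_mem f (Finset.mem_univ x))
  have hsumall : ∑ i, preimCard f i = n := by
    have h1 : (Finset.univ : Finset (Fin n)).card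
        = ∑ b ∈ (Finset.univ : Finset (Fin ℓ)), (Finset.univ.filter fun x => f x = b).card :=
      Finset.card_eq_sum_card_fiberwise (fun x _ => Finset.mem_univ (f x))
    simpa [preimCard] using h1.symm
  have hsumIm : ∑ i ∈ Im, preimCard f i = n :=
    (Finset.sum_subset (Finset.subset_univ Im) (fun i _ hi => hc0 i hi)).trans hsumall
  -- every fiber has size ≤ q + a
  have hca : ∀ i ∈ Im, preimCard f i ≤ q + a := by
    intro i hi
    by_contra hlt
    push_neg at hlt
    have hall : ∀ j ∈ Im, q + 1 ≤ preimCard f j := by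
      intro j hj
      have h := abs_le.1 (hpw i hi j hj)
      have h1 := h.1
      have h2 := h.2
      omega
    have hb : Im.card * (q + 1) ≤ ∑ j ∈ Im, preimCard f j := by
      have := Finset.card_nsmul_le_sum Im (fun j => preimCard f j) (q + 1) hall
      simpa [smul_eq_mul] using this
    rw [hsumIm, hmIm] at hb
    have : m * (q + 1) = m * q + m := by ring
    omega
  -- choose the set of fibers receiving ⌈n/m⌉
  obtain ⟨R, hRsub, hRcard⟩ := Finset.exists_subset_card_eq (show r ≤ Im.card by omega)
  set T : Fin ℓ → ℕ := fun i => if i ∈ R then q + 1 else if i ∈ Im then q else 0 with hT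
  have hTq : ∀ i ∈ Im, q ≤ T i := by
    intro i hi
    rw [hT]
    by_cases h : i ∈ R <;> simp [h, hi]
  have hTub : ∀ i, T i ≤ q + 1 := by
    intro i
    rw [hT]
    by_cases h : i ∈ R <;> by_cases h' : i ∈ Im <;> simp [h, h'] <;> omega
  have hT0 : ∀ i, i ∉ Im → T i = 0 := by
    intro i hi
    have hiR : i ∉ R := fun h => hi (hRsub h)
    rw [hT]
    simp [hi, hiR]
  have hTpos : ∀ i, (0 < T i ↔ i ∈ Im) := by
    intro i
    constructor
    · intro h
      by_contra hi
      rw [hT0 i hi] at h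
      omega
    · intro hi
      have := hTq i hi
      omega
  have hTsum : ∑ i, T i = n := by
    have h1 : ∑ i, T i = ∑ i ∈ Im, T i :=
      (Finset.sum_subset (Finset.subset_univ Im) (fun i _ hi => hT0 i hi)).symm
    have h2 : ∑ i ∈ Im \ R, T i + ∑ i ∈ R, T i = ∑ i ∈ Im, T i := Finset.sum_sdiff hRsub
    have h3 : ∑ i ∈ R, T i = r * (q + 1) := by
      rw [Finset.sum_congr rfl (fun i hi => show T i = q + 1 by rw [hT]; simp [hi])]
      rw [Finset.sum_const, hRcard, smul_eq_mul]
    have h4 : ∑ i ∈ Im \ R, T i = (m - r) * q := by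
      rw [Finset.sum_congr rfl (fun i hi => show T i = q by
        obtain ⟨hiIm, hiR⟩ := Finset.mem_sdiff.1 hi
        rw [hT]; simp [hiR, hiIm])]
      rw [Finset.sum_const, Finset.card_sdiff_of_subset hRsub, hRcard, hmIm, smul_eq_mul]
    have h5 : (m - r) * q + r * (q + 1) = m * q + r := by
      have : (m - r) * q = m * q - r * q := by
        rw [Nat.sub_mul]
      have hrq : r * q ≤ m * q := Nat.mul_le_mul_right _ (by omega)
      have : r * (q + 1) = r * q + r := by ring
      omega
    omega
  set e : Fin ℓ → ℕ := fun i => preimCard f i - T i with he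
  have heV : ∀ i, e i = preimCard f i - T i := fun _ => rfl
  have hea : ∀ i, e i ≤ a := by
    intro i
    rw [heV]
    by_cases hi : i ∈ Im
    · have := hca i hi
      have := hTq i hi
      omega
    · have := hc0 i hi
      omega
  have hke : ∀ i, (k + 1) * e i ≤ preimCard f i := by
    intro i
    by_cases h0 : e i = 0
    · rw [h0]; omega
    · have hi : i ∈ Im := by
        by_contra hi
        have := hc0 i hi
        have : e i = 0 := by rw [heV]; omega
        exact h0 this
      have h1 : k * e i ≤ k * a := Nat.mul_le_mul_left _ (hea i)
      have h2 : a * (k + 1) = a * k + a := by ring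
      have h3 : k * a = a * k := Nat.mul_comm _ _
      have h4 : (k + 1) * e i = k * e i + e i := by ring
      have h5 := hTq i hi
      have h6 := heV i
      omega
  -- disjoint blocks inside each fiber
  have hblocks : ∀ i : Fin ℓ, ∃ B : ℕ → Finset (Fin n),
      (∀ t < k + 1, B t ⊆ (Finset.univ.filter fun x => f x = i) ∧ (B t).card = e i) ∧
      (∀ t < k + 1, ∀ t' < k + 1, t ≠ t' → Disjoint (B t) (B t')) := by
    intro i
    exact exists_disjoint_blocks (e i) (k + 1) _ (hke i)
  choose B hB1 hB2 using hblocks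
  set M : ℕ → Finset (Fin n) := fun t => Finset.univ.biUnion (fun i => B i t) with hM
  have hMd : ∀ t < k + 1, ∀ t' < k + 1, t ≠ t' → Disjoint (M t) (M t') := by
    intro t ht t' ht' hne
    rw [Finset.disjoint_left]
    intro x hx hx'
    obtain ⟨i, _, hxi⟩ := Finset.mem_biUnion.1 hx
    obtain ⟨j, _, hxj⟩ := Finset.mem_biUnion.1 hx'
    have hfi : f x = i := (Finset.mem_filter.1 ((hB1 i t ht).1 hxi)).2
    have hfj : f x = j := (Finset.mem_filter.1 ((hB1 j t' ht').1 hxj)).2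
    have hij : i = j := hfi ▸ hfj
    subst hij
    exact Finset.disjoint_left.1 (hB2 i t ht t' ht' hne) hxi hxj
  -- the complement of M t keeps at most T i elements in each fiber
  have hDT : ∀ t < k + 1, ∀ i, ((M t)ᶜ.filter fun x => f x = i).card ≤ T i := by
    intro t ht i
    have hsub : ((M t)ᶜ.filter fun x => f x = i)
        ⊆ (Finset.univ.filter fun x => f x = i) \ B i t := by
      intro x hx
      obtain ⟨hxM, hxf⟩ := Finset.mem_filter.1 hx
      rw [Finset.mem_sdiff]
      refine ⟨Finset.mem_filter.2 ⟨Finset.mem_univ x, hxf⟩, fun hxB => ?_⟩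
      exact (Finset.mem_compl.1 hxM) (Finset.mem_biUnion.2 ⟨i, Finset.mem_univ i, hxB⟩)
    have hcard := Finset.card_le_card hsub
    rw [Finset.card_sdiff_of_subset (hB1 i t ht).1, (hB1 i t ht).2] at hcard
    have h7 : (Finset.univ.filter fun x => f x = i).card = preimCard f i := rfl
    rw [h7] at hcard
    have h8 := heV i
    omega
  -- construct the smoothed functions
  have hg : ∀ t, t < k + 1 → ∃ g : Fin n → Fin ℓ,
      (∀ x ∈ (M t)ᶜ, g x = f x) ∧ ∀ i, preimCard g i = T i := by
    intro t ht
    exact rearrange_lemma hℓ f T ((M t)ᶜ) hTsum (hDT t ht)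
  choose g hg1 hg2 using hg
  set G : Finset (Fin n → Fin ℓ) :=
    (Finset.range (k + 1)).attach.image (fun t => g t.1 (Finset.mem_range.1 t.2)) with hG
  have hGcard : G.card ≤ k + 1 := by
    calc G.card ≤ (Finset.range (k + 1)).attach.card := Finset.card_image_le
      _ = k + 1 := by rw [Finset.card_attach, Finset.card_range]
  -- uniformity of each member
  have hUnif : ∀ t (ht : t < k + 1), ∀ i ∈ Finset.univ.image (g t ht),
      n / imageSize (g t ht) ≤ preimCard (g t ht) i ∧
        preimCard (g t ht) i ≤ (n + imageSize (g t ht) - 1) / imageSize (g t ht) := by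
    intro t ht
    have himg : Finset.univ.image (g t ht) = Im := by
      ext i
      rw [mem_image_iff_preim, hg2 t ht i, ← hTpos i]
    have hims : imageSize (g t ht) = m := by
      rw [imageSize, himg, hmIm]
    intro i hi
    rw [himg] at hi
    rw [hg2 t ht i, hims]
    constructor
    · exact hTq i hi
    · by_cases hiR : i ∈ R
      · have hTi : T i = q + 1 := by rw [hT]; simp [hiR]
        rw [hTi]
        rw [Nat.le_div_iff_mul_le hm]
        have hr1 : 1 ≤ r := by
          have : R.Nonempty := ⟨i, hiR⟩
          have := Finset.card_pos.2 this
          omega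
        have : (q + 1) * m = m * q + m := by ring
        omega
      · have hTi : T i = q := by rw [hT]; simp [hiR, hi]
        rw [hTi]
        have : q = n / m := hq_def
        rw [this]
        exact Nat.div_le_div_right (by omega)
  refine ⟨G, hGcard, ?_, ?_⟩
  · intro g' hg'
    obtain ⟨t, _, rfl⟩ := Finset.mem_image.1 hg'
    exact hUnif t.1 (Finset.mem_range.1 t.2)
  · -- splitter agreement via pigeonhole
    intro S hS
    have hpig : ∃ t, ∃ ht : t < k + 1, ∀ x ∈ S, x ∉ M t := by
      by_contra hcon
      push_neg at hcon
      have hcon' : ∀ t : {t // t ∈ Finset.range (k + 1)}, ∃ x ∈ S, x ∈ M t.1 := by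
        intro t
        obtain ⟨x, hx1, hx2⟩ := hcon t.1 (Finset.mem_range.1 t.2)
        exact ⟨x, hx1, hx2⟩
      choose ch hchS hchM using hcon'
      have hlt : S.card < (Finset.range (k + 1)).attach.card := by
        rw [Finset.card_attach, Finset.card_range, hS]
        omega
      obtain ⟨t, _, t', _, hne, heq⟩ :=
        Finset.exists_ne_map_eq_of_card_lt_of_maps_to hlt (fun t _ => hchS t)
      have htne : t.1 ≠ t'.1 := fun h => hne (Subtype.ext h)
      have := Finset.disjoint_left.1
        (hMd t.1 (Finset.mem_range.1 t.2) t'.1 (Finset.mem_range.1 t'.2) htne)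
        (hchM t) (heq ▸ hchM t')
      exact this
    obtain ⟨t, ht, hSM⟩ := hpig
    refine ⟨g t ht, ?_, ?_⟩
    · rw [hG]
      exact Finset.mem_image.2 ⟨⟨t, Finset.mem_range.2 ht⟩, Finset.mem_attach _ _, rfl⟩
    · intro x hx
      exact hg1 t ht x (Finset.mem_compl.2 (hSM x hx))


theorem smoothing_lemma (n k ℓ a : ℕ) (hk : 0 < k) (hℓ : 0 < ℓ) (ha : 0 < a)
    (hn : 0 < n) (hkℓ : k ≤ ℓ) (hsize : a * ℓ * (k + 1) ≤ n)
    (F : Finset (Fin n → Fin ℓ))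
    (hsp : IsSplitter n k ℓ F) (hau : IsAUniformFamily n ℓ a F) :
    ∃ F' : Finset (Fin n → Fin ℓ),
      IsSplitter n k ℓ F' ∧ IsUniformFamily n ℓ F' ∧
        F'.card ≤ (k + 1) * F.card := by
  classical
  have hper : ∀ f : {f // f ∈ F}, ∃ G : Finset (Fin n → Fin ℓ), G.card ≤ k + 1 ∧
      (∀ g ∈ G, ∀ i ∈ Finset.univ.image g,
        n / imageSize g ≤ preimCard g i ∧
          preimCard g i ≤ (n + imageSize g - 1) / imageSize g) ∧
      (∀ S : Finset (Fin n), S.card = k → ∃ g ∈ G, ∀ x ∈ S, g x = f.1 x) :=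
    fun f => perF hk hℓ ha hn hsize f.1 ((hau f.1 f.2).2)
  choose Gf hG1 hG2 hG3 using hper
  refine ⟨F.attach.biUnion Gf, ?_, ?_, ?_⟩
  · intro S hS
    obtain ⟨f, hf, hbounds⟩ := hsp S hS
    obtain ⟨g, hgG, hagree⟩ := hG3 ⟨f, hf⟩ S hS
    refine ⟨g, Finset.mem_biUnion.2 ⟨⟨f, hf⟩, Finset.mem_attach _ _, hgG⟩, ?_⟩
    intro i
    have : (S.filter fun x => g x = i) = (S.filter fun x => f x = i) :=
      Finset.filter_congr (fun x hx => by rw [hagree x hx])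
    rw [this]
    exact hbounds i
  · intro g hg
    obtain ⟨f, _, hgG⟩ := Finset.mem_biUnion.1 hg
    exact hG2 f g hgG
  · calc (F.attach.biUnion Gf).card ≤ ∑ f ∈ F.attach, (Gf f).card :=
        Finset.card_biUnion_le
    _ ≤ ∑ _f ∈ F.attach, (k + 1) := Finset.sum_le_sum (fun f _ => hG1 f)
    _ = (k + 1) * F.card := by
        rw [Finset.sum_const, Finset.card_attach, smul_eq_mul, Nat.mul_comm]
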